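/- For β₃(ℓ) := (1/ℓ)[3/2 - γ - (1 - 3/(2ℓ))(1 - 1/ℓ)ψ(1/ℓ) - (1/ℓ)(1 - 6/ℓ)ψ(2/ℓ) - (3/(2ℓ))(1 + 3/ℓ)ψ(3/ℓ)], one has β₃(ℓ) → 1 as ℓ → ∞. -/

import Mathlib

/-- The digamma function `ψ(x) = Γ'(x)/Γ(x)`. -/
noncomputable def digamma (x : ℝ) : ℝ := deriv Real.Gamma x / Real.Gamma x

/-- `g₂(x) = 3/2 - γ - ψ(x+1) - 2x(ψ(2x) - ψ(x))`. -/
noncomputable def g2 (x : ℝ) : ℝ :=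
  3 / 2 - Real.eulerMascheroniConstant - digamma (x + 1)
    - 2 * x * (digamma (2 * x) - digamma x)

/-- `g₃(x) = 2 - γ - ψ(x+1) + (x/2)(5-3x)ψ(x) - x(1-6x)ψ(2x) - (3x/2)(1+3x)ψ(3x)`. -/
noncomputable def g3 (x : ℝ) : ℝ :=
  2 - Real.eulerMascheroniConstant - digamma (x + 1)
    + x / 2 * (5 - 3 * x) * digamma x
    - x * (1 - 6 * x) * digamma (2 * x)
    - 3 * x / 2 * (1 + 3 * x) * digamma (3 * x)

/-- `β₁(ℓ) = (1/ℓ)(-γ - ψ(1/ℓ))`. -/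
noncomputable def beta1 (l : ℝ) : ℝ :=
  1 / l * (-Real.eulerMascheroniConstant - digamma (1 / l))

/-- `β₂(ℓ) = (1/ℓ)[1 - γ - (1 - 2/ℓ)ψ(1/ℓ) - (2/ℓ)ψ(2/ℓ)]`. -/
noncomputable def beta2 (l : ℝ) : ℝ :=
  1 / l * (1 - Real.eulerMascheroniConstant - (1 - 2 / l) * digamma (1 / l)
    - 2 / l * digamma (2 / l))

/-- `β₃(ℓ) = (1/ℓ)[3/2 - γ - (1 - 3/(2ℓ))(1 - 1/ℓ)ψ(1/ℓ) - (1/ℓ)(1 - 6/ℓ)ψ(2/ℓ)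
  - (3/(2ℓ))(1 + 3/ℓ)ψ(3/ℓ)]`. -/
noncomputable def beta3 (l : ℝ) : ℝ :=
  1 / l * (3 / 2 - Real.eulerMascheroniConstant
    - (1 - 3 / (2 * l)) * (1 - 1 / l) * digamma (1 / l)
    - 1 / l * (1 - 6 / l) * digamma (2 / l)
    - 3 / (2 * l) * (1 + 3 / l) * digamma (3 / l))


open Filter

lemma gamma_ne_neg (x : ℝ) (hx : 0 < x) : ∀ m : ℕ, x ≠ -m := by
  intro m h
  have : (0:ℝ) ≤ (m:ℝ) := Nat.cast_nonneg m
  nlinarith [h ▸ hx]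

lemma deriv_gamma_add_one (x : ℝ) (hx : 0 < x) :
    deriv Real.Gamma (x + 1) = Real.Gamma x + x * deriv Real.Gamma x := by
  have hdx : DifferentiableAt ℝ Real.Gamma x := Real.differentiableAt_Gamma (gamma_ne_neg x hx)
  have hdx1 : DifferentiableAt ℝ Real.Gamma (x + 1) :=
    Real.differentiableAt_Gamma (gamma_ne_neg _ (by linarith))
  have h1 : HasDerivAt (fun y : ℝ => Real.Gamma (y + 1)) (deriv Real.Gamma (x + 1)) x := by
    simpa [Function.comp_def] using (hdx1.hasDerivAt.comp x ((hasDerivAt_id x).add_const 1))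
  have h2 : HasDerivAt (fun y : ℝ => y * Real.Gamma y)
      (Real.Gamma x + x * deriv Real.Gamma x) x := by
    simpa [mul_comm, Pi.mul_def] using (hasDerivAt_id x).mul hdx.hasDerivAt
  have heq : (fun y : ℝ => Real.Gamma (y + 1)) =ᶠ[nhds x] (fun y : ℝ => y * Real.Gamma y) := by
    filter_upwards [eventually_ne_nhds hx.ne'] with y hy
    exact Real.Gamma_add_one hy
  have := (h1.congr_of_eventuallyEq heq.symm).unique h2
  linarith [this]

lemma digamma_rec (x : ℝ) (hx : 0 < x) : digamma x = digamma (x + 1) - 1 / x := by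
  have hG : Real.Gamma x ≠ 0 := (Real.Gamma_pos_of_pos hx).ne'
  have hkey := deriv_gamma_add_one x hx
  unfold digamma
  rw [hkey, Real.Gamma_add_one hx.ne']
  field_simp
  ring

lemma continuousAt_deriv_gamma_one : ContinuousAt (deriv Real.Gamma) 1 := by
  have hopen : IsOpen {z : ℂ | 0 < z.re} := isOpen_lt continuous_const Complex.continuous_re
  have hdo : DifferentiableOn ℂ Complex.Gamma {z : ℂ | 0 < z.re} := by
    intro z hz
    refine (Complex.differentiableAt_Gamma z fun m h => ?_).differentiableWithinAt
    have : z.re = -(m:ℝ) := by rw [h]; simp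
    have hm : (0:ℝ) ≤ (m:ℝ) := Nat.cast_nonneg m
    simp only [Set.mem_setOf_eq, this] at hz
    linarith
  have han : AnalyticOnNhd ℂ Complex.Gamma {z : ℂ | 0 < z.re} := hdo.analyticOnNhd hopen
  have hderivan : AnalyticOnNhd ℂ (deriv Complex.Gamma) {z : ℂ | 0 < z.re} := han.deriv
  have hc : ContinuousAt (deriv Complex.Gamma) 1 :=
    (hderivan 1 (by simp)).continuousAt
  -- deriv Real.Gamma agrees with re ∘ deriv Complex.Gamma ∘ ofReal near 1
  have heq : (fun x : ℝ => (deriv Complex.Gamma x).re) =ᶠ[nhds (1:ℝ)] deriv Real.Gamma := by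
    filter_upwards [eventually_gt_nhds (by norm_num : (0:ℝ) < 1)] with y hy
    have hne := gamma_ne_neg y hy
    have hd : DifferentiableAt ℂ Complex.Gamma y := by
      refine Complex.differentiableAt_Gamma _ fun m h => ?_
      exact hne m (by exact_mod_cast h)
    have := hd.hasDerivAt.real_of_complex
    have h2 : HasDerivAt Real.Gamma (deriv Complex.Gamma y).re y := by
      refine this.congr_of_eventuallyEq ?_
      filter_upwards with z
      rw [Complex.Gamma_ofReal]; simp
    exact (h2.deriv).symm
  have hc' : ContinuousAt (deriv Complex.Gamma) ((1:ℝ):ℂ) := by simpa using hc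
  have : ContinuousAt (fun x : ℝ => (deriv Complex.Gamma x).re) 1 :=
    Complex.continuous_re.continuousAt.comp (hc'.comp Complex.continuous_ofReal.continuousAt)
  exact this.congr heq

lemma continuousAt_digamma_one : ContinuousAt digamma 1 := by
  have hG : ContinuousAt Real.Gamma 1 :=
    (Real.differentiableAt_Gamma (gamma_ne_neg 1 one_pos)).continuousAt
  exact continuousAt_deriv_gamma_one.div hG (by simp [Real.Gamma_one])

noncomputable def G (x : ℝ) : ℝ :=
  x * (3 / 2 - Real.eulerMascheroniConstant)
    - (1 - 3 / 2 * x) * (1 - x) * (x * digamma (x + 1) - 1)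
    - x * (1 - 6 * x) * (x * digamma (2 * x + 1) - 1 / 2)
    - 3 / 2 * x * (1 + 3 * x) * (x * digamma (3 * x + 1) - 1 / 3)

lemma contAt_digamma_shift (c : ℝ) : ContinuousAt (fun x : ℝ => digamma (c * x + 1)) 0 := by
  have h2 : ContinuousAt (fun x : ℝ => c * x + 1) 0 := by fun_prop
  refine ContinuousAt.comp (g := digamma) (f := fun x : ℝ => c * x + 1) ?_ h2
  simpa using continuousAt_digamma_one

lemma contAt_G : ContinuousAt G 0 := by
  have c1 : ContinuousAt (fun x : ℝ => digamma (x + 1)) 0 := by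
    simpa using contAt_digamma_shift 1
  have c2 := contAt_digamma_shift 2
  have c3 := contAt_digamma_shift 3
  have cid : ContinuousAt (fun x : ℝ => x) 0 := continuousAt_id
  unfold G
  exact ((((cid.mul continuousAt_const).sub
    (((continuousAt_const.sub (continuousAt_const.mul cid)).mul
      (continuousAt_const.sub cid)).mul ((cid.mul c1).sub continuousAt_const))).sub
    ((cid.mul (continuousAt_const.sub (continuousAt_const.mul cid))).mul
      ((cid.mul c2).sub continuousAt_const))).sub
    (((continuousAt_const.mul cid).mul (continuousAt_const.add (continuousAt_const.mul cid))).mul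
      ((cid.mul c3).sub continuousAt_const)))

theorem beta3_tendsto_one : Filter.Tendsto beta3 Filter.atTop (nhds 1) := by
  have h1 : Filter.Tendsto (fun l : ℝ => 1 / l) Filter.atTop (nhds 0) := by
    simpa [one_div] using tendsto_inv_atTop_zero
  have hG0 : G 0 = 1 := by unfold G; norm_num
  have hF : Filter.Tendsto (fun l : ℝ => G (1 / l)) Filter.atTop (nhds 1) := by
    have := contAt_G.tendsto.comp h1
    rwa [hG0] at this
  refine hF.congr' ?_
  filter_upwards [Filter.eventually_ge_atTop (1 : ℝ)] with l hl
  have hlp : 0 < l := lt_of_lt_of_le one_pos hl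
  have hne : l ≠ 0 := hlp.ne'
  have r1 := digamma_rec (1 / l) (by positivity)
  have r2 := digamma_rec (2 / l) (by positivity)
  have r3 := digamma_rec (3 / l) (by positivity)
  unfold beta3 G
  rw [r1, r2, r3]
  rw [show 2 * (1 / l) = 2 / l by ring, show 3 * (1 / l) = 3 / l by ring]
  field_simp
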